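/- For δ ∈ ℝ, define j_0(δ) = k if δ = −k for some k ∈ ℕ and j_0(δ) = 0 otherwise, and define A_δ = k! if δ = −k for some k ∈ ℕ and A_δ = 1/Γ(1+δ) otherwise. Then ∏_{j=j_0(δ)+1}^{n−1} (1 + δ/j) is asymptotically equivalent to A_δ · n^δ as n → ∞. -/

import Mathlib

open Filter Asymptotics Topology

noncomputable section
open scoped Classical

/-- `j₀(δ) = k` if `δ = -k` for some `k ∈ {1,2,…}`, and `j₀(δ) = 0` otherwise. -/
def j0 (δ : ℝ) : ℕ :=
  if h : ∃ k : ℕ, 1 ≤ k ∧ δ = -(k : ℝ) then h.choose else 0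

/-- `A_δ = k!` if `δ = -k` for some `k ∈ {1,2,…}`, and `A_δ = 1/Γ(1+δ)` otherwise. -/
def Aconst (δ : ℝ) : ℝ :=
  if h : ∃ k : ℕ, 1 ≤ k ∧ δ = -(k : ℝ) then (Nat.factorial h.choose : ℝ) else 1 / Real.Gamma (1 + δ)


lemma my_tendsto_ratio (a b : ℝ) :
    Tendsto (fun n : ℕ => ((n : ℝ) + a) / ((n : ℝ) + b)) atTop (𝓝 1) := by
  have h1 : Tendsto (fun n : ℕ => 1 + a / (n : ℝ)) atTop (𝓝 1) := by
    simpa using tendsto_const_nhds.add (tendsto_const_div_atTop_nhds_zero_nat a)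
  have h2 : Tendsto (fun n : ℕ => 1 + b / (n : ℝ)) atTop (𝓝 1) := by
    simpa using tendsto_const_nhds.add (tendsto_const_div_atTop_nhds_zero_nat b)
  have h3 := h1.div h2 one_ne_zero
  rw [div_one] at h3
  refine h3.congr' ?_
  filter_upwards [eventually_ge_atTop 1] with n hn
  have hn0 : (n : ℝ) ≠ 0 := by positivity
  have e1 : 1 + a / (n : ℝ) = ((n : ℝ) + a) / n := by field_simp
  have e2 : 1 + b / (n : ℝ) = ((n : ℝ) + b) / n := by field_simp
  simp only [Pi.div_apply]
  rw [e1, e2]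
  rcases eq_or_ne ((n : ℝ) + b) 0 with h | h
  · simp [h]
  · field_simp

lemma my_pos_case (δ : ℝ) (hδ : ∀ k : ℕ, 1 ≤ k → δ ≠ -(k : ℝ)) :
    (fun n : ℕ => ∏ j ∈ Finset.Ico 1 n, (1 + δ / (j : ℝ)))
      ~[atTop] fun n : ℕ => (1 / Real.Gamma (1 + δ)) * (n : ℝ) ^ δ := by
  have hne : ∀ j : ℕ, (1 + δ) + (j : ℝ) ≠ 0 := by
    intro j h
    exact hδ (j + 1) (by omega) (by push_cast; linarith)
  have hΓ : Real.Gamma (1 + δ) ≠ 0 := by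
    apply Real.Gamma_ne_zero
    intro m h
    exact hδ (m + 1) (by omega) (by push_cast; linarith)
  have hGS : ∀ m : ℕ, 1 ≤ m → Real.GammaSeq (1 + δ) m ≠ 0 := by
    intro m hm
    have hm0 : (0:ℝ) < m := by exact_mod_cast hm
    apply div_ne_zero
    · apply mul_ne_zero
      · positivity
      · exact_mod_cast (Nat.factorial_ne_zero m)
    · exact Finset.prod_ne_zero_iff.mpr fun j _ => hne j
  rw [isEquivalent_iff_tendsto_one]
  swap
  · filter_upwards [eventually_ge_atTop 1] with n hn
    have : (0:ℝ) < n := by exact_mod_cast hn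
    have : (0:ℝ) < (n:ℝ) ^ δ := Real.rpow_pos_of_pos this δ
    positivity
  have h1 : Tendsto (fun n : ℕ => Real.Gamma (1 + δ) / Real.GammaSeq (1 + δ) (n - 2))
      atTop (𝓝 1) := by
    have hcomp : Tendsto (fun n : ℕ => Real.GammaSeq (1 + δ) (n - 2)) atTop
        (𝓝 (Real.Gamma (1 + δ))) :=
      (Real.GammaSeq_tendsto_Gamma (1 + δ)).comp (tendsto_sub_atTop_nat 2)
    have := ((tendsto_const_nhds : Tendsto (fun _ : ℕ => Real.Gamma (1 + δ)) atTop _).div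
      hcomp hΓ)
    rw [div_self hΓ] at this
    exact this.congr fun n => by simp
  have hbase : Tendsto (fun n : ℕ => ((n : ℝ) - 2) / (n : ℝ)) atTop (𝓝 1) := by
    have := my_tendsto_ratio (-2) 0
    simpa [sub_eq_add_neg] using this
  have h2 : Tendsto (fun n : ℕ => (((n : ℝ) - 2) / (n : ℝ)) ^ δ) atTop (𝓝 1) := by
    have hc : ContinuousAt (fun x : ℝ => x ^ δ) 1 :=
      Real.continuousAt_rpow_const 1 δ (Or.inl one_ne_zero)
    have := hc.tendsto.comp hbase
    simpa [Real.one_rpow, Function.comp_def] using this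
  have h3 : Tendsto (fun n : ℕ => ((n : ℝ) - 2) / ((n : ℝ) - 1)) atTop (𝓝 1) := by
    have := my_tendsto_ratio (-2) (-1)
    simpa [sub_eq_add_neg] using this
  have hmain := (h1.mul h2).mul h3
  rw [show (1:ℝ) * 1 * 1 = 1 by norm_num] at hmain
  refine hmain.congr' ?_
  filter_upwards [eventually_ge_atTop 3] with n hn
  have hn2 : 2 ≤ n := by omega
  have hs : (0:ℝ) < (n : ℝ) - 2 := by
    have : (3:ℝ) ≤ n := by exact_mod_cast hn
    linarith
  have ht : (0:ℝ) < (n : ℝ) - 1 := by linarith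
  have hnpos : (0:ℝ) < n := by linarith
  set G := Real.GammaSeq (1 + δ) (n - 2) with hG
  set D : ℝ := ∏ i ∈ Finset.range (n - 1), ((1 + δ) + (i : ℝ)) with hD
  have hD0 : D ≠ 0 := Finset.prod_ne_zero_iff.mpr fun j _ => hne j
  have hG0 : G ≠ 0 := hGS (n - 2) (by omega)
  have hcast : ((n - 2 : ℕ) : ℝ) = (n : ℝ) - 2 := by
    push_cast [Nat.cast_sub hn2]
    ring
  -- value of GammaSeq
  have hGSval : G = ((n : ℝ) - 2) ^ (1 + δ) * ((n - 2).factorial : ℝ) / D := by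
    have he : n - 2 + 1 = n - 1 := by omega
    rw [hG, Real.GammaSeq, hcast, he, ← hD]
  have hrpow : ((n : ℝ) - 2) ^ (1 + δ) = ((n : ℝ) - 2) * ((n : ℝ) - 2) ^ δ := by
    rw [Real.rpow_add hs, Real.rpow_one]
  -- product identity
  have hP : (∏ j ∈ Finset.Ico 1 n, (1 + δ / (j : ℝ)))
      = D / (((n - 1).factorial : ℝ)) := by
    have e1 : ∀ j ∈ Finset.Ico 1 n, (1 + δ / (j : ℝ)) = (δ + j) / j := by
      intro j hj
      obtain ⟨h1, _⟩ := Finset.mem_Ico.mp hj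
      have : (0:ℝ) < j := by exact_mod_cast h1
      field_simp
      ring
    rw [Finset.prod_congr rfl e1, Finset.prod_div_distrib]
    congr 1
    · rw [Finset.prod_Ico_eq_prod_range, hD]
      have hcard : n - 1 = n - 1 := rfl
      apply Finset.prod_congr rfl
      intro i _
      push_cast
      ring
    · rw [← Nat.cast_prod]
      congr 1
      have : n = (n - 1) + 1 := by omega
      rw [this, Finset.prod_Ico_id_eq_factorial]
      norm_num
  have hfact : ((n - 1).factorial : ℝ) = ((n : ℝ) - 1) * ((n - 2).factorial : ℝ) := by
    have : n - 1 = (n - 2) + 1 := by omega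
    rw [this, Nat.factorial_succ]
    push_cast [Nat.cast_sub hn2]
    ring
  have hdivrpow : (((n : ℝ) - 2) / (n : ℝ)) ^ δ = ((n : ℝ) - 2) ^ δ / (n : ℝ) ^ δ :=
    Real.div_rpow (le_of_lt hs) (le_of_lt hnpos) δ
  have hDval : D = ((n : ℝ) - 2) * ((n : ℝ) - 2) ^ δ * ((n - 2).factorial : ℝ) / G := by
    rw [eq_div_iff hG0, hGSval, hrpow]
    field_simp
  show Real.Gamma (1 + δ) / G * (((n : ℝ) - 2) / (n : ℝ)) ^ δ * (((n : ℝ) - 2) / ((n : ℝ) - 1))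
      = (∏ j ∈ Finset.Ico 1 n, (1 + δ / (j : ℝ)))
        / (1 / Real.Gamma (1 + δ) * (n : ℝ) ^ δ)
  rw [hP, hdivrpow, hDval, hfact]
  have hnδ : (0:ℝ) < (n : ℝ) ^ δ := Real.rpow_pos_of_pos hnpos δ
  have ha0 : ((n - 2).factorial : ℝ) ≠ 0 := by exact_mod_cast Nat.factorial_ne_zero _
  field_simp

lemma my_neg_case (k : ℕ) (hk : 1 ≤ k) :
    (fun n : ℕ => ∏ j ∈ Finset.Ico (k + 1) n, (1 + (-(k : ℝ)) / j))
      ~[atTop] fun n : ℕ => (k.factorial : ℝ) * (n : ℝ) ^ (-(k : ℝ)) := by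
  rw [isEquivalent_iff_tendsto_one]
  swap
  · filter_upwards [eventually_ge_atTop 1] with n hn
    have : (0:ℝ) < n := by exact_mod_cast hn
    positivity
  have hmain : Tendsto (fun n : ℕ => ∏ m ∈ Finset.range k,
      ((n : ℝ) / ((n : ℝ) - k + m))) atTop (𝓝 1) := by
    have h := tendsto_finset_prod (f := fun (m : ℕ) (n : ℕ) => (n : ℝ) / ((n : ℝ) - k + m))
      (a := fun _ => (1:ℝ)) (Finset.range k) (fun m _ => by
        have h := my_tendsto_ratio 0 ((m : ℝ) - k)
        refine h.congr fun n => ?_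
        rw [add_zero]
        congr 1
        ring)
    simpa using h
  refine hmain.congr' ?_
  filter_upwards [eventually_ge_atTop (k + 1)] with n hn
  have hkn : k ≤ n := le_trans (Nat.le_succ k) hn
  have hn1 : 1 ≤ n := le_trans hk hkn
  -- key real-number quantities
  set a : ℝ := ((n - k - 1).factorial : ℝ) with ha
  set b : ℝ := ((n - 1).factorial : ℝ) with hb
  set c : ℝ := (k.factorial : ℝ) with hc
  set N : ℝ := (n : ℝ) ^ k with hN
  set Q : ℝ := ∏ m ∈ Finset.range k, ((n : ℝ) - k + m) with hQ
  -- step A/B : product = a / P with P = ∏ j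
  have stepAB : (∏ j ∈ Finset.Ico (k + 1) n, (1 + (-(k : ℝ)) / j))
      = a / (∏ j ∈ Finset.Ico (k + 1) n, (j : ℝ)) := by
    rw [eq_div_iff, ← Finset.prod_mul_distrib]
    · rw [ha]
      have : ∀ j ∈ Finset.Ico (k + 1) n, (1 + (-(k : ℝ)) / j) * (j : ℝ) = ((j - k : ℕ) : ℝ) := by
        intro j hj
        obtain ⟨h1, h2⟩ := Finset.mem_Ico.mp hj
        have hj0 : (0:ℝ) < j := by
          have : 1 ≤ j := le_trans (Nat.succ_le_succ (Nat.zero_le k)) h1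
          exact_mod_cast this
        have hjk : k ≤ j := le_trans (Nat.le_succ k) h1
        rw [Nat.cast_sub hjk]
        field_simp
        ring
      rw [Finset.prod_congr rfl this, ← Nat.cast_prod]
      congr 1
      rw [Finset.prod_Ico_eq_prod_range]
      have : ∀ i, (k + 1 + i) - k = i + 1 := fun i => by omega
      simp only [this]
      rw [Finset.prod_range_add_one_eq_factorial, Nat.sub_sub]
    · apply Finset.prod_ne_zero_iff.mpr
      intro j hj
      obtain ⟨h1, _⟩ := Finset.mem_Ico.mp hj
      have : (0:ℝ) < j := by
        have : 1 ≤ j := le_trans (Nat.succ_le_succ (Nat.zero_le k)) h1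
        exact_mod_cast this
      positivity
  -- step D : c * P = b
  have stepD : c * (∏ j ∈ Finset.Ico (k + 1) n, (j : ℝ)) = b := by
    rw [hc, hb, ← Nat.cast_prod, ← Nat.cast_mul]
    congr 1
    have h1 : (∏ j ∈ Finset.Ico 1 (k + 1), j) * (∏ j ∈ Finset.Ico (k + 1) n, j)
        = ∏ j ∈ Finset.Ico 1 n, j :=
      Finset.prod_Ico_consecutive _ (Nat.one_le_iff_ne_zero.mpr (Nat.succ_ne_zero k)) hn
    rw [Finset.prod_Ico_id_eq_factorial] at h1
    rw [h1]
    have : n = (n - 1) + 1 := by omega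
    rw [this, Finset.prod_Ico_id_eq_factorial]
    norm_num
  -- step E : b = Q' * a with Q' nat prod; and Q' = Q
  have stepE : b = Q * a := by
    have h1 : (∏ j ∈ Finset.Ico 1 (n - k), j) * (∏ j ∈ Finset.Ico (n - k) n, j)
        = ∏ j ∈ Finset.Ico 1 n, j :=
      Finset.prod_Ico_consecutive _ (by omega) (by omega)
    have e1 : (∏ j ∈ Finset.Ico 1 (n - k), j) = (n - k - 1).factorial := by
      have : n - k = (n - k - 1) + 1 := by omega
      rw [this, Finset.prod_Ico_id_eq_factorial]
      norm_num
    have e2 : (∏ j ∈ Finset.Ico 1 n, j) = (n - 1).factorial := by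
      have : n = (n - 1) + 1 := by omega
      rw [this, Finset.prod_Ico_id_eq_factorial]
      norm_num
    rw [e1, e2] at h1
    have e3 : Q = ((∏ j ∈ Finset.Ico (n - k) n, j : ℕ) : ℝ) := by
      rw [hQ, Nat.cast_prod, Finset.prod_Ico_eq_prod_range]
      have hnk : n - (n - k) = k := by omega
      rw [hnk]
      apply Finset.prod_congr rfl
      intro m hm
      push_cast [Nat.cast_sub hkn]
      ring
    rw [hb, ha, e3, ← Nat.cast_mul]
    exact Nat.cast_inj.mpr (by rw [← h1, Nat.mul_comm])
  -- final algebra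
  have ha0 : a ≠ 0 := by rw [ha]; exact_mod_cast (Nat.factorial_ne_zero _)
  have hb0 : b ≠ 0 := by rw [hb]; exact_mod_cast (Nat.factorial_ne_zero _)
  have hc0 : c ≠ 0 := by rw [hc]; exact_mod_cast (Nat.factorial_ne_zero _)
  have hn0 : (0:ℝ) < n := by exact_mod_cast hn1
  have hN0 : N ≠ 0 := by rw [hN]; positivity
  have hQ0 : Q ≠ 0 := fun h => hb0 (by rw [stepE, h, zero_mul])
  have hP0 : (∏ j ∈ Finset.Ico (k + 1) n, (j : ℝ)) ≠ 0 := by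
    intro h
    rw [h, mul_zero] at stepD
    exact hb0 stepD.symm
  show ∏ m ∈ Finset.range k, ((n : ℝ) / ((n : ℝ) - k + m))
      = (∏ j ∈ Finset.Ico (k + 1) n, (1 + (-(k : ℝ)) / j)) / (c * (n : ℝ) ^ (-(k : ℝ)))
  have hrpow : (n : ℝ) ^ (-(k : ℝ)) = N⁻¹ := by
    rw [hN, ← Real.rpow_natCast (n:ℝ) k, ← Real.rpow_neg (le_of_lt hn0)]
  have hLHS : ∏ m ∈ Finset.range k, ((n : ℝ) / ((n : ℝ) - k + m)) = N / Q := by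
    rw [Finset.prod_div_distrib, ← hQ, Finset.prod_const, Finset.card_range, hN]
  rw [hLHS, stepAB, hrpow]
  have hP : (∏ j ∈ Finset.Ico (k + 1) n, (j : ℝ)) = b / c := by
    field_simp [← stepD]
    rw [mul_comm]; exact stepD
  rw [hP, stepE]
  field_simp


/-- Lemma 2: `∏_{j=j₀(δ)+1}^{n-1} (1 + δ/j) ~ A_δ · n^δ` as `n → ∞`. -/
theorem stmt_15 (δ : ℝ) :
    (fun n : ℕ => ∏ j ∈ Finset.Ico (j0 δ + 1) n, (1 + δ / (j : ℝ)))
      ~[atTop] fun n : ℕ => Aconst δ * (n : ℝ) ^ δ := by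
  by_cases h : ∃ k : ℕ, 1 ≤ k ∧ δ = -(k : ℝ)
  · obtain ⟨hk1, hδeq⟩ := h.choose_spec
    simp only [j0, Aconst, dif_pos h]
    generalize hg : h.choose = k at hk1 hδeq ⊢
    subst hδeq
    exact my_neg_case k hk1
  · simp only [j0, Aconst, dif_neg h, zero_add]
    push_neg at h
    exact my_pos_case δ fun k hk => h k hk

end
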